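/- arXiv:1707.06590 — 2 statements merged into one kernel-verified Lean document; each statement's English description precedes it below -/
import Mathlib

section
/- For all natural numbers i and j, ∑_{k=0}^{i} (−1)^{j+k} · t_{ik} · q_{kj} = (1 if i = j, else 0), where t_{ik} is the coefficient of x^i in (1+2x)·(x(1+x))^k ∈ ℝ[[x]] and q_{kj} is the coefficient of x^k in W(x)·(xC(x))^j ∈ ℝ[[x]] with W(x) = ∑_{n≥0} binom(2n,n) xⁿ. (In matrix form this says D(𝕃^S)⁻¹D = (W(x), xC(x)).) -/
open PowerSeries Finset

/-- The generating function of the Catalan numbers. -/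
noncomputable def catalanGF : PowerSeries ℝ :=
  PowerSeries.mk fun n => (catalan n : ℝ)

/-- The generating function `W(x) = ∑ binom(2n,n) xⁿ` of the central binomial coefficients. -/
noncomputable def centralBinomGF : PowerSeries ℝ :=
  PowerSeries.mk fun n => ((2 * n).choose n : ℝ)

namespace StmtAux

noncomputable def A : ℝ⟦X⟧ := -(X * (1 + X))

lemma X_dvd_A : (X : ℝ⟦X⟧) ∣ A := dvd_neg.mpr (dvd_mul_right _ _)

/-- Congruence modulo `X^N`. -/
def Cong (N : ℕ) (F G : ℝ⟦X⟧) : Prop := (X : ℝ⟦X⟧) ^ N ∣ F - G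

lemma Cong.refl (N : ℕ) (F : ℝ⟦X⟧) : Cong N F F := by simp [Cong]

lemma Cong.symm {N F G} (h : Cong N F G) : Cong N G F := by
  simpa [Cong] using (dvd_neg.mpr h)

lemma Cong.trans {N F G H} (h1 : Cong N F G) (h2 : Cong N G H) : Cong N F H := by
  have := dvd_add h1 h2
  simpa [Cong] using this

lemma Cong.add {N F F' G G'} (h1 : Cong N F F') (h2 : Cong N G G') :
    Cong N (F + G) (F' + G') := by
  have := dvd_add h1 h2
  simpa [Cong, add_sub_add_comm] using this

lemma Cong.mul {N F F' G G'} (h1 : Cong N F F') (h2 : Cong N G G') :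
    Cong N (F * G) (F' * G') := by
  obtain ⟨u, hu⟩ := h1
  obtain ⟨v, hv⟩ := h2
  exact ⟨F * v + u * G', by linear_combination F * hv + hu * G'⟩

lemma Cong.pow {N F G} (h : Cong N F G) (j : ℕ) : Cong N (F ^ j) (G ^ j) := by
  induction j with
  | zero => simpa using Cong.refl N 1
  | succ m ih => simpa [pow_succ] using ih.mul h

/-- Truncated substitution of `A` into a power series. -/
noncomputable def Phi (N : ℕ) (F : ℝ⟦X⟧) : ℝ⟦X⟧ :=
  Polynomial.aeval A (trunc N F)

lemma Phi_add (N : ℕ) (F G : ℝ⟦X⟧) : Phi N (F + G) = Phi N F + Phi N G := by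
  simp [Phi, map_add]

lemma Phi_one (N : ℕ) : Phi (N + 1) 1 = 1 := by simp [Phi]

lemma Phi_X (N : ℕ) : Phi (N + 2) X = A := by simp [Phi]

lemma trunc_neg (N : ℕ) (F : ℝ⟦X⟧) : trunc N (-F) = -trunc N F := by
  apply Polynomial.ext
  intro m
  simp only [coeff_trunc, Polynomial.coeff_neg, map_neg]

lemma Phi_neg (N : ℕ) (F : ℝ⟦X⟧) : Phi N (-F) = -Phi N F := by
  simp [Phi, trunc_neg]

lemma aeval_dvd {N : ℕ} {p : Polynomial ℝ} (h : (Polynomial.X : Polynomial ℝ) ^ N ∣ p) :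
    (X : ℝ⟦X⟧) ^ N ∣ Polynomial.aeval A p := by
  obtain ⟨q, hq⟩ := h
  rw [hq, map_mul, map_pow, Polynomial.aeval_X]
  exact dvd_mul_of_dvd_left (pow_dvd_pow_of_dvd X_dvd_A N) _

lemma Phi_mul (N : ℕ) (F G : ℝ⟦X⟧) : Cong N (Phi N (F * G)) (Phi N F * Phi N G) := by
  have key : (Polynomial.X : Polynomial ℝ) ^ N ∣ (trunc N (F * G) - trunc N F * trunc N G) := by
    rw [Polynomial.X_pow_dvd_iff]
    intro d hd
    rw [Polynomial.coeff_sub, coeff_trunc, if_pos hd, Polynomial.coeff_mul, coeff_mul,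
      sub_eq_zero]
    apply Finset.sum_congr rfl
    intro x hx
    rw [Finset.HasAntidiagonal.mem_antidiagonal] at hx
    rw [coeff_trunc, coeff_trunc, if_pos, if_pos]
    · omega
    · omega
  have := aeval_dvd key
  rw [map_sub, map_mul (Polynomial.aeval A)] at this
  exact this

lemma Phi_pow (N : ℕ) (F : ℝ⟦X⟧) (j : ℕ) :
    Cong (N + 1) (Phi (N + 1) (F ^ j)) ((Phi (N + 1) F) ^ j) := by
  induction j with
  | zero => simpa [Phi_one] using Cong.refl (N + 1) 1
  | succ m ih =>
      have h1 := Phi_mul (N + 1) (F ^ m) F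
      have h2 := ih.mul (Cong.refl (N + 1) (Phi (N + 1) F))
      simpa [pow_succ] using h1.trans h2

/-- `C = 1 + X C²`. -/
lemma F1 : catalanGF = 1 + X * catalanGF ^ 2 := by
  ext n
  cases n with
  | zero => simp [catalanGF]
  | succ m =>
      rw [map_add, sq, coeff_succ_X_mul, coeff_mul]
      simp only [catalanGF, coeff_mk, coeff_one, Nat.succ_ne_zero, if_false, zero_add]
      rw [catalan_succ']
      push_cast
      rfl

lemma F1' : (X * catalanGF) = X + (X * catalanGF) ^ 2 := by
  conv_lhs => rw [F1]
  ring

lemma dW : (d⁄dX ℝ) (X * catalanGF) = centralBinomGF := by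
  ext n
  rw [coeff_derivative, coeff_succ_X_mul]
  simp only [catalanGF, centralBinomGF, coeff_mk]
  have h := succ_mul_catalan_eq_centralBinom n
  have : ((n + 1) * catalan n : ℝ) = (n.centralBinom : ℝ) := by exact_mod_cast congrArg Nat.cast h
  rw [Nat.centralBinom] at this
  linarith

/-- `W (1 - 2XC) = 1`. -/
lemma F2 : centralBinomGF * (1 - 2 * (X * catalanGF)) = 1 := by
  have hd : (d⁄dX ℝ) (X * catalanGF)
      = 1 + 2 * (X * catalanGF) * ((d⁄dX ℝ) (X * catalanGF)) := by
    conv_lhs => rw [F1']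
    rw [map_add, derivative_X, sq, Derivation.leibniz]
    simp only [smul_eq_mul]
    ring
  rw [dW] at hd
  linear_combination hd


lemma A_def : A = -(X * (1 + X)) := rfl

lemma Cong.sub {N F F' G G'} (h1 : Cong N F F') (h2 : Cong N G G') :
    Cong N (F - G) (F' - G') := by
  have := dvd_sub h1 h2
  simpa [Cong, sub_sub_sub_comm] using this

lemma Phi_one' (N : ℕ) (h : N ≠ 0) : Phi N 1 = 1 := by
  obtain ⟨M, rfl⟩ : ∃ M, N = M + 1 := ⟨N - 1, by omega⟩
  exact Phi_one M

lemma Phi_X' (N : ℕ) (h : 2 ≤ N) : Phi N X = A := by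
  obtain ⟨M, rfl⟩ : ∃ M, N = M + 2 := ⟨N - 2, by omega⟩
  exact Phi_X M

lemma Phi_pow' (N : ℕ) (h : N ≠ 0) (F : ℝ⟦X⟧) (j : ℕ) :
    Cong N (Phi N (F ^ j)) ((Phi N F) ^ j) := by
  obtain ⟨M, rfl⟩ : ∃ M, N = M + 1 := ⟨N - 1, by omega⟩
  exact Phi_pow M F j

lemma PhiC_cong (n : ℕ) :
    Cong (n+2) (Phi (n+2) catalanGF) (1 + A * (Phi (n+2) catalanGF) ^ 2) := by
  have h0 : Phi (n+2) catalanGF = 1 + Phi (n+2) (X * catalanGF ^ 2) := by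
    conv_lhs => rw [F1]
    rw [Phi_add, Phi_one' _ (by omega)]
  nth_rewrite 1 [h0]
  have h1 : Cong (n+2) (Phi (n+2) (X * catalanGF ^ 2)) (A * (Phi (n+2) catalanGF) ^ 2) := by
    have hm := Phi_mul (n+2) X (catalanGF ^ 2)
    have h2 := Phi_pow' (n+2) (by omega) catalanGF 2
    have h3 : Cong (n+2) (Phi (n+2) X * Phi (n+2) (catalanGF ^ 2))
        (A * (Phi (n+2) catalanGF) ^ 2) := by
      rw [Phi_X' _ (by omega)]
      exact (Cong.refl _ A).mul h2
    exact hm.trans h3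
  exact (Cong.refl (n+2) 1).add h1

lemma t_cong (n : ℕ) : Cong (n+2) ((1 + X) * Phi (n+2) catalanGF) 1 := by
  set N := n + 2 with hN
  set D := Phi N catalanGF with hDdef
  have h := PhiC_cong n
  have h2 : Cong N ((1+X) * D) ((1+X) - X * ((1+X)*D)^2) := by
    have hm := (Cong.refl N (1+X)).mul h
    have e : (1+X) * (1 + A * D^2) = (1+X) - X * ((1+X)*D)^2 := by
      rw [A_def]; ring
    rwa [e] at hm
  set t := (1+X) * D with htdef
  have h3 : (X:ℝ⟦X⟧)^N ∣ (t - 1) * (1 + X * (t + 1)) := by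
    have e : t - ((1+X) - X*t^2) = (t - 1) * (1 + X * (t + 1)) := by ring
    rw [← e]; exact h2
  have hu : IsUnit (1 + X * (t + 1) : ℝ⟦X⟧) := by
    rw [PowerSeries.isUnit_iff_constantCoeff]
    simp
  obtain ⟨v, hv⟩ := hu.exists_right_inv
  have h4 : (X:ℝ⟦X⟧)^N ∣ (t - 1) := by
    have := h3.mul_right v
    rwa [mul_assoc, hv, mul_one] at this
  exact h4

lemma PhiXC_cong (n : ℕ) : Cong (n+2) (Phi (n+2) (X * catalanGF)) (-X) := by
  have h1 := Phi_mul (n+2) X catalanGF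
  rw [Phi_X' _ (by omega)] at h1
  have h2 : Cong (n+2) (A * Phi (n+2) catalanGF) (-X) := by
    have ht := (Cong.refl (n+2) (-X : ℝ⟦X⟧)).mul (t_cong n)
    have e1 : -X * ((1+X) * Phi (n+2) catalanGF) = A * Phi (n+2) catalanGF := by
      rw [A_def]; ring
    have e2 : -X * (1:ℝ⟦X⟧) = -X := mul_one _
    rwa [e1, e2] at ht
  exact h1.trans h2

lemma PhiW_cong (n : ℕ) : Cong (n+2) ((1 + 2*X) * Phi (n+2) centralBinomGF) 1 := by
  set N := n + 2 with hN
  have hZ : Phi N (1 - 2*(X*catalanGF)) = 1 - 2 * Phi N (X * catalanGF) := by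
    have e : (1 : ℝ⟦X⟧) - 2*(X*catalanGF) = 1 + (-(X*catalanGF) + -(X*catalanGF)) := by ring
    rw [e, Phi_add, Phi_add, Phi_one' _ (by omega), Phi_neg]
    ring
  have h1 : Phi N (centralBinomGF * (1 - 2*(X*catalanGF))) = 1 := by
    rw [F2, Phi_one' _ (by omega)]
  have h2 := Phi_mul N centralBinomGF (1 - 2*(X*catalanGF))
  rw [h1, hZ] at h2
  have h3 : Cong N (Phi N centralBinomGF * (1 - 2 * Phi N (X*catalanGF)))
      (Phi N centralBinomGF * (1 - 2 * (-X))) :=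
    (Cong.refl N _).mul ((Cong.refl N 1).sub ((Cong.refl N 2).mul (PhiXC_cong n)))
  have h4 := (h2.trans h3).symm
  have e : Phi N centralBinomGF * (1 - 2 * (-X)) = (1 + 2*X) * Phi N centralBinomGF := by ring
  rwa [e] at h4

lemma final_cong (n j : ℕ) :
    Cong (n+2) ((1 + 2*X) * Phi (n+2) (centralBinomGF * (X*catalanGF)^j)) ((-X)^j) := by
  set N := n + 2 with hN
  have h1 := Phi_mul N centralBinomGF ((X*catalanGF)^j)
  have h2 := Phi_pow' N (by omega) (X*catalanGF) j
  have h3 := (PhiXC_cong n).pow j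
  have hG : Cong N (Phi N (centralBinomGF * (X*catalanGF)^j))
      (Phi N centralBinomGF * (-X)^j) :=
    h1.trans ((Cong.refl N _).mul (h2.trans h3))
  have h4 := (Cong.refl N (1+2*X : ℝ⟦X⟧)).mul hG
  have h5 : Cong N ((1+2*X) * (Phi N centralBinomGF * (-X)^j)) (1 * (-X)^j) := by
    have := (PhiW_cong n).mul (Cong.refl N ((-X : ℝ⟦X⟧)^j))
    rwa [mul_assoc] at this
  have h6 := h4.trans h5
  rwa [one_mul] at h6

lemma coeff_Phi_mul (N i : ℕ) (H G : ℝ⟦X⟧) :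
    coeff i (H * Phi N G) = ∑ k ∈ range N, coeff k G * coeff i (H * A ^ k) := by
  rw [Phi, trunc_apply, map_sum, Finset.mul_sum, map_sum, Finset.range_eq_Ico]
  apply Finset.sum_congr rfl
  intro k _
  rw [Polynomial.aeval_monomial, ← Algebra.smul_def, mul_smul_comm, map_smul, smul_eq_mul]


end StmtAux

open StmtAux

/-- `D(𝕃^S)⁻¹D = (W(x), xC(x))`: the matrix with `(i,j)` entry the coefficient of `x^i` in
`W(x)·(xC(x))^j` is the inverse of the matrix with `(i,j)` entry `(-1)^(i+j)` times the
coefficient of `x^i` in `(1+2x)·(x(1+x))^j`. -/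
theorem stmt_1 (i j : ℕ) :
    (∑ k ∈ Finset.range (i + 1),
        (-1 : ℝ) ^ (j + k) *
          (PowerSeries.coeff i
            ((1 + 2 * PowerSeries.X) * (PowerSeries.X * (1 + PowerSeries.X)) ^ k)) *
          (PowerSeries.coeff k (centralBinomGF * (PowerSeries.X * catalanGF) ^ j))) =
      if i = j then (1 : ℝ) else 0 := by
  classical
  set G := centralBinomGF * (X * catalanGF) ^ j with hGdef
  have hcong := final_cong i j
  have hco : coeff i ((1 + 2*X) * Phi (i+2) G) = coeff i ((-X : ℝ⟦X⟧)^j) := by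
    obtain ⟨u, hu⟩ := hcong
    have h0 : coeff i ((X:ℝ⟦X⟧)^(i+2) * u) = 0 :=
      X_pow_dvd_iff.mp ⟨u, rfl⟩ i (by omega)
    have := congrArg (coeff i) hu
    rw [map_sub, h0] at this
    linarith
  rw [coeff_Phi_mul, Finset.sum_range_succ] at hco
  have hzero : coeff i ((1+2*X) * A^(i+1)) = 0 := by
    have hdvd : (X:ℝ⟦X⟧)^(i+1) ∣ (1+2*X) * A^(i+1) :=
      Dvd.dvd.mul_left (pow_dvd_pow_of_dvd X_dvd_A (i+1)) _
    exact X_pow_dvd_iff.mp hdvd i (by omega)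
  rw [hzero, mul_zero, add_zero] at hco
  have hR : coeff i ((-X : ℝ⟦X⟧)^j) = (-1:ℝ)^j * (if i = j then 1 else 0) := by
    have e : ((-X : ℝ⟦X⟧))^j = PowerSeries.C ((-1:ℝ)^j) * X^j := by
      rw [neg_pow, map_pow, map_neg, map_one]
    rw [e, coeff_C_mul, coeff_X_pow]
  have hterm : ∀ k ∈ Finset.range (i+1),
      (-1:ℝ)^(j+k) * coeff i ((1 + 2*X) * (X*(1+X))^k) * coeff k G
        = (-1:ℝ)^j * (coeff k G * coeff i ((1+2*X) * A^k)) := by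
    intro k _
    have e : (1+2*X) * A^k = PowerSeries.C ((-1:ℝ)^k) * ((1+2*X)*(X*(1+X))^k) := by
      rw [A_def, neg_pow, map_pow, map_neg, map_one]; ring
    rw [e, coeff_C_mul, pow_add]
    ring
  rw [Finset.sum_congr rfl hterm, ← Finset.mul_sum, hco, hR, ← mul_assoc, ← pow_add]
  have : Even (j + j) := ⟨j, rfl⟩
  rw [this.neg_one_pow, one_mul]
end

section
/- For all n ≥ 1, q_{n1} = (2n−1)·C_{n−1}; and for all natural numbers n and j with j ≥ 2 and n ≥ j, q_{nj} = (n−1)·C_{n−1} + ∑_{k=1}^{⌊(j−1)/2⌋} (−1)^k · [ (n−1−k)·(binom(j−1−k, k) + binom(j−2−k, k−1)) + binom(j−2−k, k−1) ] · C_{n−1−k}. -/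
open PowerSeries Finset

/-- `q i j` is the coefficient of `x^i` in `W(x)·(xC(x))^j`, i.e. the `(i,j)` entry of
`D(𝕃^S)⁻¹D`. -/
noncomputable def qEntry (i j : ℕ) : ℝ :=
  PowerSeries.coeff i (centralBinomGF * (PowerSeries.X * catalanGF) ^ j)

lemma hC : catalanGF = 1 + X * catalanGF ^ 2 := by
  ext n
  rw [map_add]
  cases n with
  | zero => simp [catalanGF]
  | succ n =>
    rw [coeff_succ_X_mul]
    simp only [catalanGF, coeff_mk, coeff_one, pow_two, PowerSeries.coeff_mul, coeff_mk]
    rw [catalan_succ']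
    push_cast
    simp

lemma hW : centralBinomGF = catalanGF + X * (d⁄dX ℝ catalanGF) := by
  ext n
  rw [map_add]
  cases n with
  | zero => simp [centralBinomGF, catalanGF]
  | succ n =>
    rw [coeff_succ_X_mul, coeff_derivative]
    simp only [centralBinomGF, catalanGF, coeff_mk]
    have := succ_mul_catalan_eq_centralBinom (n+1)
    rw [Nat.centralBinom_eq_two_mul_choose] at this
    push_cast [← this]
    ring

lemma keyPS : centralBinomGF * (1 - 2 * X * catalanGF) = 1 := by
  have h1 : catalanGF = 1 + X * catalanGF ^ 2 := hC
  have hd : d⁄dX ℝ catalanGF =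
      catalanGF ^ 2 + X * (2 * catalanGF * d⁄dX ℝ catalanGF) := by
    conv_lhs => rw [h1]
    rw [map_add, Derivation.leibniz, Derivation.leibniz_pow]
    simp only [Derivation.map_one_eq_zero, derivative_X, smul_eq_mul, nsmul_eq_mul, pow_one, mul_one,
      Nat.cast_ofNat, zero_add]
    ring
  rw [hW]
  linear_combination h1 + X * hd

lemma hXC2 : (X * catalanGF) ^ 2 = X * catalanGF - X := by
  linear_combination (-X) * hC

lemma q0 (n : ℕ) : qEntry n 0 = ((2 * n).choose n : ℝ) := by
  simp [qEntry, centralBinomGF]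

lemma choose_half (m : ℕ) : (2 * (m + 1)).choose (m + 1) = 2 * (2 * m + 1).choose m := by
  have h : 2 * (m + 1) = (2 * m + 1) + 1 := by ring
  rw [h, Nat.choose_succ_succ, Nat.choose_symm_half]
  omega

lemma q1 {n : ℕ} (hn : 1 ≤ n) : qEntry n 1 = (((2 * n - 1).choose (n - 1) : ℕ) : ℝ) := by
  obtain ⟨m, rfl⟩ : ∃ m, n = m + 1 := ⟨n - 1, by omega⟩
  have h2 : qEntry (m + 1) 1 + qEntry (m + 1) 1 = ((2 * (m + 1)).choose (m + 1) : ℝ) := by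
    have hps : centralBinomGF * (X * catalanGF) ^ 1 + centralBinomGF * (X * catalanGF) ^ 1 =
        centralBinomGF - 1 := by
      linear_combination -keyPS
    have hco := congrArg (fun f => PowerSeries.coeff (m + 1) f) hps
    simp only [map_add, map_sub, coeff_one, qEntry, centralBinomGF, coeff_mk] at hco ⊢
    simpa using hco
  have h3 : (2 * (m + 1)).choose (m + 1) = 2 * (2 * (m + 1) - 1).choose (m + 1 - 1) := by
    have := choose_half m
    have e1 : 2 * (m + 1) - 1 = 2 * m + 1 := by omega
    have e2 : m + 1 - 1 = m := by omega
    rw [e1, e2]; exact this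
  rw [h3] at h2
  push_cast at h2 ⊢
  linarith

lemma qrec (n j : ℕ) (hn : 1 ≤ n) :
    qEntry n (j + 2) = qEntry n (j + 1) - qEntry (n - 1) j := by
  have hps : centralBinomGF * (X * catalanGF) ^ (j + 2) =
      centralBinomGF * (X * catalanGF) ^ (j + 1)
        - X * (centralBinomGF * (X * catalanGF) ^ j) := by
    have h := hXC2
    ring_nf
    linear_combination (centralBinomGF * (X * catalanGF) ^ j) * hXC2
  have hco := congrArg (fun f => PowerSeries.coeff n f) hps
  simp only [map_sub] at hco
  obtain ⟨m, rfl⟩ : ∃ m, n = m + 1 := ⟨n - 1, by omega⟩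
  rw [coeff_succ_X_mul] at hco
  simpa [qEntry] using hco

lemma qclosed : ∀ j n : ℕ, j ≤ n → qEntry n j = (((2 * n - j).choose (n - j) : ℕ) : ℝ) := by
  intro j
  induction j using Nat.strong_induction_on with
  | _ j ih =>
    match j with
    | 0 => intro n _; simpa using q0 n
    | 1 => intro n hn; simpa using q1 hn
    | (j + 2) =>
      intro n hn
      rw [qrec n j (by omega), ih (j + 1) (by omega) n (by omega),
        ih j (by omega) (n - 1) (by omega)]
      have e1 : 2 * (n - 1) - j = 2 * n - (j + 2) := by omega
      have e2 : n - 1 - j = (n - (j + 2)) + 1 := by omega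
      have e3 : 2 * n - (j + 1) = (2 * n - (j + 2)) + 1 := by omega
      have e4 : n - (j + 1) = (n - (j + 2)) + 1 := by omega
      rw [e1, e2, e3, e4, Nat.choose_succ_succ]
      push_cast
      ring

lemma I1 (m : ℕ) : (2 * m + 1).choose m = (2 * m + 1) * catalan m := by
  have h := Nat.add_one_mul_choose_eq (2 * m) m
  have hs := Nat.choose_symm_half m
  have hc := succ_mul_catalan_eq_centralBinom m
  rw [Nat.centralBinom_eq_two_mul_choose] at hc
  have : ((2 * m + 1) * catalan m) * (m + 1) = (2 * m + 1).choose m * (m + 1) := by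
    calc ((2 * m + 1) * catalan m) * (m + 1) = (2 * m + 1) * ((m + 1) * catalan m) := by ring
    _ = (2 * m + 1) * (2 * m).choose m := by rw [hc]
    _ = (2 * m + 1).choose (m + 1) * (m + 1) := by simpa using h
    _ = (2 * m + 1).choose m * (m + 1) := by rw [hs]
  exact (Nat.eq_of_mul_eq_mul_right (by omega) this).symm

lemma I2 (m : ℕ) : (2 * (m + 1)).choose m = (m + 1) * catalan (m + 1) := by
  have h := Nat.choose_succ_right_eq (2 * (m + 1)) m
  have hc := succ_mul_catalan_eq_centralBinom (m + 1)
  rw [Nat.centralBinom_eq_two_mul_choose] at hc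
  have e : 2 * (m + 1) - m = m + 2 := by omega
  rw [e, ← hc] at h
  have : ((m + 1) * catalan (m + 1)) * (m + 2) = (2 * (m + 1)).choose m * (m + 2) := by
    calc ((m + 1) * catalan (m + 1)) * (m + 2)
        = (m + 1 + 1) * catalan (m + 1) * (m + 1) := by ring
    _ = (2 * (m + 1)).choose m * (m + 2) := h
  exact (Nat.eq_of_mul_eq_mul_right (by omega) this).symm

lemma part1 {n : ℕ} (hn : 1 ≤ n) :
    qEntry n 1 = ((2 * n - 1 : ℕ) : ℝ) * (catalan (n - 1) : ℝ) := by
  obtain ⟨m, rfl⟩ : ∃ m, n = m + 1 := ⟨n - 1, by omega⟩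
  rw [q1 hn]
  have e1 : 2 * (m + 1) - 1 = 2 * m + 1 := by omega
  have e2 : m + 1 - 1 = m := by omega
  rw [e1, e2, I1]
  push_cast
  ring

noncomputable def tR (n j k : ℕ) : ℝ :=
  (-1 : ℝ) ^ k *
    (((n - 1 - k : ℕ) : ℝ) *
        (((j - 1 - k).choose k : ℝ) + ((j - 2 - k).choose (k - 1) : ℝ)) +
      ((j - 2 - k).choose (k - 1) : ℝ)) *
    (catalan (n - 1 - k) : ℝ)

noncomputable def Rhs (n j : ℕ) : ℝ :=
  ((n - 1 : ℕ) : ℝ) * (catalan (n - 1) : ℝ) + ∑ k ∈ Finset.Icc 1 ((j - 1) / 2), tR n j k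

lemma sum_Icc_one (L : ℕ) (f : ℕ → ℝ) : ∑ k ∈ Icc 1 L, f k = ∑ i ∈ range L, f (i + 1) := by
  induction L with
  | zero => simp
  | succ L ih => rw [Finset.sum_Icc_succ_top (by omega), ih, Finset.sum_range_succ]

lemma key1 {n j : ℕ} (hj : 2 ≤ j) (hn : j + 2 ≤ n) :
    tR n (j + 2) 1 = tR n (j + 1) 1 - ((n - 2 : ℕ) : ℝ) * (catalan (n - 2) : ℝ) := by
  have e1 : j + 2 - 1 - 1 = j := by omega
  have e2 : j + 2 - 2 - 1 = j - 1 := by omega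
  have e3 : j + 1 - 1 - 1 = j - 1 := by omega
  have e4 : j + 1 - 2 - 1 = j - 2 := by omega
  simp only [tR, e1, e2, e3, e4, Nat.choose_one_right, Nat.choose_zero_right,
    pow_one, Nat.sub_zero]
  have c1 : ((j - 1 : ℕ) : ℝ) = (j : ℝ) - 1 := by
    have : 1 ≤ j := by omega
    push_cast [this]; ring
  rw [c1]
  rw [show n - 1 - 1 = n - 2 by omega, Nat.choose_zero_right, Nat.choose_zero_right]
  push_cast
  ring

lemma key2 {n j k : ℕ} (hj : 2 * (k + 2) ≤ j) (hn : j + 2 ≤ n) :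
    tR n (j + 2) (k + 2) = tR n (j + 1) (k + 2) - tR (n - 1) j (k + 1) := by
  set K := k + 2 with hK
  have e1 : j + 2 - 1 - K = (j - 1 - K) + 2 := by omega
  have e2 : j + 2 - 2 - K = (j - 1 - K) + 1 := by omega
  have e3 : j + 1 - 1 - K = (j - 1 - K) + 1 := by omega
  have e4 : j + 1 - 2 - K = j - 1 - K := by omega
  have e5 : j - 1 - (K - 1) = (j - 1 - K) + 1 := by omega
  have e6 : j - 2 - (K - 1) = j - 1 - K := by omega
  have e7 : n - 1 - 1 - (K - 1) = n - 1 - K := by omega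
  have e8 : K - 1 = k + 1 := by omega
  have e9 : K - 1 - 1 = k := by omega
  set a := j - 1 - K with ha
  have p1 : (a + 2).choose K = (a + 1).choose (k + 1) + (a + 1).choose K := by
    rw [hK, Nat.choose_succ_succ (a + 1) (k + 1)]
  have p2 : (a + 1).choose (k + 1) = a.choose k + a.choose (k + 1) := Nat.choose_succ_succ a k
  simp only [tR, e1, e2, e3, e4]
  rw [show j - 1 - (k + 1) = a + 1 by omega, show j - 2 - (k + 1) = a by omega,
    show n - 1 - 1 - (k + 1) = n - 1 - K by omega, show k + 1 - 1 = k from rfl,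
    show K - 1 = k + 1 from rfl]
  rw [p1, p2]
  push_cast
  ring

lemma key3 {n m : ℕ} (hm : 1 ≤ m) (hn : 2 * m + 3 ≤ n) :
    tR n (2 * m + 1 + 2) (m + 1) = - tR (n - 1) (2 * m + 1) m := by
  have e1 : 2 * m + 1 + 2 - 1 - (m + 1) = m + 1 := by omega
  have e2 : 2 * m + 1 + 2 - 2 - (m + 1) = m := by omega
  have e3 : m + 1 - 1 = m := rfl
  have e4 : 2 * m + 1 - 1 - m = m := by omega
  have e5 : 2 * m + 1 - 2 - m = m - 1 := by omega
  have e6 : m - 1 = m - 1 := rfl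
  have e7 : n - 1 - 1 - m = n - 1 - (m + 1) := by omega
  simp only [tR, e1, e2, e3, e4, e5, e7, Nat.choose_self]
  rw [pow_succ]
  push_cast
  ring


lemma peel {m : ℕ} (hm : 1 ≤ m) (f : ℕ → ℝ) :
    ∑ i ∈ range m, f i = f 0 + ∑ i ∈ range (m - 1), f (i + 1) := by
  obtain ⟨m', rfl⟩ : ∃ m', m = m' + 1 := ⟨m - 1, by omega⟩
  rw [Finset.sum_range_succ']
  simp [add_comm]

lemma Rrec {n j : ℕ} (hj : 2 ≤ j) (hn : j + 2 ≤ n) :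
    Rhs n (j + 2) = Rhs n (j + 1) - Rhs (n - 1) j := by
  have hC2 : ((n - 1 - 1 : ℕ) : ℝ) * (catalan (n - 1 - 1) : ℝ)
      = ((n - 2 : ℕ) : ℝ) * (catalan (n - 2) : ℝ) := by
    rw [show n - 1 - 1 = n - 2 by omega]
  by_cases hpar : j % 2 = 0
  · obtain ⟨m, rfl⟩ : ∃ m, j = 2 * m := ⟨j / 2, by omega⟩
    have hm : 1 ≤ m := by omega
    have L2 : (2 * m + 2 - 1) / 2 = m := by omega
    have L1 : (2 * m + 1 - 1) / 2 = m := by omega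
    have L0 : (2 * m - 1) / 2 = m - 1 := by omega
    simp only [Rhs, L2, L1, L0, sum_Icc_one, hC2]
    have main : ∑ i ∈ range m, (tR n (2 * m + 2) (i + 1) - tR n (2 * m + 1) (i + 1))
        = -(((n - 2 : ℕ) : ℝ) * (catalan (n - 2) : ℝ))
          - ∑ i ∈ range (m - 1), tR (n - 1) (2 * m) (i + 1) := by
      rw [peel hm]
      rw [show (0 : ℕ) + 1 = 1 from rfl, key1 (n := n) (j := 2 * m) (by omega) (by omega)]
      have hcg : ∀ i ∈ range (m - 1),
          tR n (2 * m + 2) (i + 1 + 1) - tR n (2 * m + 1) (i + 1 + 1)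
            = - tR (n - 1) (2 * m) (i + 1) := by
        intro i hi
        simp only [Finset.mem_range] at hi
        have h2 := key2 (n := n) (j := 2 * m) (k := i) (by omega) (by omega)
        rw [show i + 1 + 1 = i + 2 by omega, h2]
        ring
      rw [Finset.sum_congr rfl hcg, Finset.sum_neg_distrib]
      ring
    rw [Finset.sum_sub_distrib] at main
    linarith [main]
  · obtain ⟨m, rfl⟩ : ∃ m, j = 2 * m + 1 := ⟨j / 2, by omega⟩
    have hm : 1 ≤ m := by omega
    have L2 : (2 * m + 1 + 2 - 1) / 2 = m + 1 := by omega
    have L1 : (2 * m + 1 + 1 - 1) / 2 = m := by omega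
    have L0 : (2 * m + 1 - 1) / 2 = m := by omega
    simp only [Rhs, L2, L1, L0, sum_Icc_one, hC2]
    have hsplit2 : ∑ i ∈ range (m + 1), tR n (2 * m + 1 + 2) (i + 1)
        = ∑ i ∈ range m, tR n (2 * m + 1 + 2) (i + 1) + tR n (2 * m + 1 + 2) (m + 1) :=
      Finset.sum_range_succ _ m
    have hsplit0 : ∑ i ∈ range m, tR (n - 1) (2 * m + 1) (i + 1)
        = ∑ i ∈ range (m - 1), tR (n - 1) (2 * m + 1) (i + 1)
          + tR (n - 1) (2 * m + 1) m := by
      conv_lhs => rw [show m = (m - 1) + 1 by omega]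
      rw [Finset.sum_range_succ, show m - 1 + 1 = m by omega]
    have htop : tR n (2 * m + 1 + 2) (m + 1) = - tR (n - 1) (2 * m + 1) m :=
      key3 hm (by omega)
    have main : ∑ i ∈ range m, (tR n (2 * m + 1 + 2) (i + 1) - tR n (2 * m + 1 + 1) (i + 1))
        = -(((n - 2 : ℕ) : ℝ) * (catalan (n - 2) : ℝ))
          - ∑ i ∈ range (m - 1), tR (n - 1) (2 * m + 1) (i + 1) := by
      rw [peel hm]
      rw [show (0 : ℕ) + 1 = 1 from rfl, key1 (n := n) (j := 2 * m + 1) (by omega) (by omega)]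
      have hcg : ∀ i ∈ range (m - 1),
          tR n (2 * m + 1 + 2) (i + 1 + 1) - tR n (2 * m + 1 + 1) (i + 1 + 1)
            = - tR (n - 1) (2 * m + 1) (i + 1) := by
        intro i hi
        simp only [Finset.mem_range] at hi
        have h2 := key2 (n := n) (j := 2 * m + 1) (k := i) (by omega) (by omega)
        rw [show i + 1 + 1 = i + 2 by omega, h2]
        ring
      rw [Finset.sum_congr rfl hcg, Finset.sum_neg_distrib]
      ring
    rw [Finset.sum_sub_distrib] at main
    rw [hsplit2, htop]
    linarith [main, hsplit0]

lemma base2 {n : ℕ} (hn : 2 ≤ n) :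
    (((2 * n - 2).choose (n - 2) : ℕ) : ℝ) = Rhs n 2 := by
  have h : Icc 1 ((2 - 1) / 2) = (∅ : Finset ℕ) := rfl
  rw [Rhs, h, Finset.sum_empty, add_zero]
  have hI2 := I2 (n - 2)
  rw [show n - 2 + 1 = n - 1 by omega] at hI2
  rw [show 2 * n - 2 = 2 * (n - 1) by omega, hI2]
  push_cast
  ring

lemma base3 {n : ℕ} (hn : 3 ≤ n) :
    (((2 * n - 3).choose (n - 3) : ℕ) : ℝ) = Rhs n 3 := by
  have h : Icc 1 ((3 - 1) / 2) = ({1} : Finset ℕ) := rfl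
  rw [Rhs, h, Finset.sum_singleton]
  have ht : tR n 3 1 = -(((2 * n - 3 : ℕ) : ℝ) * (catalan (n - 2) : ℝ)) := by
    simp only [tR]
    norm_num
    rw [show n - 1 - 1 = n - 2 by omega,
      show (2 * n - 3 : ℕ) = 2 * (n - 2) + 1 by omega]
    push_cast
    ring
  rw [ht]
  have hI2 := I2 (n - 2)
  rw [show n - 2 + 1 = n - 1 by omega] at hI2
  have hI1 := I1 (n - 2)
  rw [show 2 * (n - 2) + 1 = 2 * n - 3 by omega] at hI1
  have hP : (2 * (n - 1)).choose (n - 2) = (2 * n - 3).choose (n - 3) + (2 * n - 3).choose (n - 2) := by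
    rw [show 2 * (n - 1) = (2 * n - 3) + 1 by omega, show n - 2 = (n - 3) + 1 by omega,
      Nat.choose_succ_succ]
  rw [hP, hI1] at hI2
  have : ((2 * n - 3).choose (n - 3) : ℝ) + ((2 * n - 3 : ℕ) : ℝ) * (catalan (n - 2) : ℝ)
      = ((n - 1 : ℕ) : ℝ) * (catalan (n - 1) : ℝ) := by
    exact_mod_cast congrArg (fun x : ℕ => (x : ℝ)) hI2
  linarith

lemma part2 : ∀ j n : ℕ, 2 ≤ j → j ≤ n →
    (((2 * n - j).choose (n - j) : ℕ) : ℝ) = Rhs n j := by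
  intro j
  induction j using Nat.strong_induction_on with
  | _ j ih =>
    match j with
    | 0 => intro n h2 _; omega
    | 1 => intro n h2 _; omega
    | 2 => intro n _ hn; exact base2 hn
    | 3 => intro n _ hn; exact base3 hn
    | (j + 4) =>
      intro n _ hn
      rw [show j + 4 = (j + 2) + 2 from rfl, Rrec (by omega) (by omega),
        ← ih (j + 3) (by omega) n (by omega) (by omega),
        ← ih (j + 2) (by omega) (n - 1) (by omega) (by omega)]
      have e1 : 2 * (n - 1) - (j + 2) = 2 * n - (j + 4) := by omega
      have e2 : n - 1 - (j + 2) = (n - (j + 4)) + 1 := by omega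
      have e3 : 2 * n - (j + 3) = (2 * n - (j + 4)) + 1 := by omega
      have e4 : n - (j + 3) = (n - (j + 4)) + 1 := by omega
      rw [e1, e2, e3, e4, Nat.choose_succ_succ]
      push_cast
      ring

/-- `q_{n1} = (2n−1)·C_{n−1}` for `n ≥ 1`, and for `j ≥ 2`, `n ≥ j`,
`q_{nj} = (n−1)·C_{n−1} + ∑_{k=1}^{⌊(j−1)/2⌋} (−1)^k ·
  [(n−1−k)·(binom(j−1−k,k) + binom(j−2−k,k−1)) + binom(j−2−k,k−1)] · C_{n−1−k}`. -/
theorem stmt_10 :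
    (∀ n : ℕ, 1 ≤ n →
      qEntry n 1 = ((2 * n - 1 : ℕ) : ℝ) * (catalan (n - 1) : ℝ)) ∧
    (∀ n j : ℕ, 2 ≤ j → j ≤ n →
      qEntry n j =
        ((n - 1 : ℕ) : ℝ) * (catalan (n - 1) : ℝ) +
          ∑ k ∈ Finset.Icc 1 ((j - 1) / 2),
            (-1 : ℝ) ^ k *
              (((n - 1 - k : ℕ) : ℝ) *
                  (((j - 1 - k).choose k : ℝ) + ((j - 2 - k).choose (k - 1) : ℝ)) +
                ((j - 2 - k).choose (k - 1) : ℝ)) *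
              (catalan (n - 1 - k) : ℝ)) := by
  constructor
  · intro n hn
    exact part1 hn
  · intro n j hj hn
    have h1 := qclosed j n hn
    have h2 := part2 j n hj hn
    rw [h1, h2, Rhs]
    simp only [tR]
end
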